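/- For every topological space X, |X| ≤ nu(X)^{κ(X)·aL(X)}. -/

import Mathlib

open Set Topology Cardinal

universe u

variable {X : Type u}

/-- The θ-closure of a set. -/
def thetaCl [TopologicalSpace X] (A : Set X) : Set X :=
  {x | ∀ U : Set X, IsOpen U → x ∈ U → (closure U ∩ A).Nonempty}

/-- The θ-closed hull of a set. -/
def thetaHull [TopologicalSpace X] (A : Set X) : Set X :=
  ⋂₀ {C : Set X | thetaCl C = C ∧ A ⊆ C}

/-- A nonempty set is finitely non-Urysohn if every finite choice of closed
neighborhoods (closures of open neighborhoods) of finitely many of its points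
has nonempty intersection. -/
def FinNonUrysohn [TopologicalSpace X] (A : Set X) : Prop :=
  A.Nonempty ∧ ∀ F : Set X, F ⊆ A → F.Nonempty → F.Finite →
    ∀ U : X → Set X, (∀ x ∈ F, IsOpen (U x) ∧ x ∈ U x) →
      (⋂ x ∈ F, closure (U x)).Nonempty

/-- The non-Urysohn number `nu(X)`. -/
noncomputable def nuNumber (X : Type u) [TopologicalSpace X] : Cardinal.{u} :=
  1 + ⨆ A : {A : Set X // FinNonUrysohn A}, #↥A.1

/-- The Urysohn number `U(X)`. -/
noncomputable def UrysohnNumber (X : Type u) [TopologicalSpace X] : Cardinal.{u} :=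
  sInf {κ : Cardinal.{u} | ∀ A : Set X, κ ≤ #↥A → ∃ U : X → Set X,
    (∀ a ∈ A, IsOpen (U a) ∧ a ∈ U a) ∧ (⋂ a ∈ A, closure (U a)) = ∅}

/-- The cardinal function `κ(X)`: the smallest infinite cardinal such that each
point has a family of at most that many closed neighborhoods cofinal (under
reverse inclusion) in the closures of its open neighborhoods. -/
noncomputable def kappaInv (X : Type u) [TopologicalSpace X] : Cardinal.{u} :=
  sInf {κ : Cardinal.{u} | ℵ₀ ≤ κ ∧ ∀ x : X, ∃ V : Set (Set X), #↥V ≤ κ ∧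
    (∀ W ∈ V, IsClosed W ∧ W ∈ nhds x) ∧
    ∀ U : Set X, IsOpen U → x ∈ U → ∃ W ∈ V, W ⊆ closure U}

/-- The character `χ(X)`. -/
noncomputable def chiChar (X : Type u) [TopologicalSpace X] : Cardinal.{u} :=
  sInf {κ : Cardinal.{u} | ℵ₀ ≤ κ ∧ ∀ x : X, ∃ B : Set (Set X), #↥B ≤ κ ∧
    (∀ U ∈ B, U ∈ nhds x) ∧ ∀ S ∈ nhds x, ∃ U ∈ B, U ⊆ S}

/-- The θ-density `d_θ(X)`. -/
noncomputable def dTheta (X : Type u) [TopologicalSpace X] : Cardinal.{u} :=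
  sInf {c : Cardinal.{u} | ∃ A : Set X, thetaCl A = Set.univ ∧ #↥A = c}

/-- The cardinal function `sL_θ(X)`. -/
noncomputable def sLtheta (X : Type u) [TopologicalSpace X] : Cardinal.{u} :=
  sInf {τ : Cardinal.{u} | ℵ₀ ≤ τ ∧ ∀ A : Set X, ∀ 𝒰 : Set (Set X),
    (∀ U ∈ 𝒰, IsOpen U) → thetaCl A ⊆ ⋃₀ 𝒰 →
    ∃ 𝒱 ⊆ 𝒰, #↥𝒱 ≤ τ ∧ A ⊆ closure (⋃₀ 𝒱)}

/-- The cardinal function `wL_c(X)`. -/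
noncomputable def wLc (X : Type u) [TopologicalSpace X] : Cardinal.{u} :=
  sInf {τ : Cardinal.{u} | ℵ₀ ≤ τ ∧ ∀ A : Set X, IsClosed A → ∀ 𝒰 : Set (Set X),
    (∀ U ∈ 𝒰, IsOpen U) → A ⊆ ⋃₀ 𝒰 →
    ∃ 𝒱 ⊆ 𝒰, #↥𝒱 ≤ τ ∧ A ⊆ closure (⋃₀ 𝒱)}

/-- The almost Lindelöf degree `aL(X)`. -/
noncomputable def aLdeg (X : Type u) [TopologicalSpace X] : Cardinal.{u} :=
  sInf {τ : Cardinal.{u} | ℵ₀ ≤ τ ∧ ∀ 𝒰 : Set (Set X),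
    (∀ U ∈ 𝒰, IsOpen U) → ⋃₀ 𝒰 = Set.univ →
    ∃ 𝒱 ⊆ 𝒰, #↥𝒱 ≤ τ ∧ (⋃ V ∈ 𝒱, closure V) = Set.univ}

/-- `X` is a Urysohn space: distinct points have open neighborhoods with
disjoint closures. -/
def UrysohnSpace (X : Type u) [TopologicalSpace X] : Prop :=
  ∀ x y : X, x ≠ y → ∃ U V : Set X, IsOpen U ∧ IsOpen V ∧ x ∈ U ∧ y ∈ V ∧
    closure U ∩ closure V = ∅

/-- For a set `S`, the intersection over all choices of closed neighborhoods of
the points of `S` of the θ-closures of the intersections of the choices. -/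
def capSet [TopologicalSpace X] (S : Set X) : Set X :=
  {y | ∀ U : X → Set X, (∀ a ∈ S, IsOpen (U a) ∧ a ∈ U a) →
    y ∈ thetaCl (⋂ a ∈ S, closure (U a))}

/-- For a set `M`, the intersection over all nonempty finite `F ⊆ M` and all
choices of open neighborhoods of points of `F` of
`cl_θ(⋂_{x∈F} closure (U x))`. -/
def fnuCap [TopologicalSpace X] (M : Set X) : Set X :=
  {y | ∀ F : Set X, F ⊆ M → F.Nonempty → F.Finite → ∀ U : X → Set X,
    (∀ x ∈ F, IsOpen (U x) ∧ x ∈ U x) →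
    y ∈ thetaCl (⋂ x ∈ F, closure (U x))}

section Statement11Aux

open Cardinal

variable {X : Type u}

/-- From a cardinality bound, produce an index-surjection onto a nonempty set. -/
lemma stmt11_exists_surj_onto {α ι : Type u} {s : Set α} (hne : s.Nonempty)
    (hle : #↥s ≤ #ι) : ∃ e : ι → α, (∀ i, e i ∈ s) ∧ ∀ a ∈ s, ∃ i, e i = a := by
  classical
  obtain ⟨f⟩ := (Cardinal.le_def _ _).1 hle
  refine ⟨fun i => if h : ∃ w : ↥s, f w = i then ((h.choose : ↥s) : α) else hne.choose,
    fun i => ?_, fun a ha => ?_⟩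
  · by_cases h : ∃ w : ↥s, f w = i
    · dsimp only
      rw [dif_pos h]; exact h.choose.2
    · dsimp only
      rw [dif_neg h]; exact hne.choose_spec
  · refine ⟨f ⟨a, ha⟩, ?_⟩
    have h : ∃ w : ↥s, f w = f ⟨a, ha⟩ := ⟨_, rfl⟩
    dsimp only
    rw [dif_pos h]
    have : h.choose = ⟨a, ha⟩ := f.injective h.choose_spec
    rw [this]

variable [TopologicalSpace X]

lemma stmt11_bddAbove_nu :
    BddAbove (Set.range fun A : {A : Set X // FinNonUrysohn A} => #↥A.1) := by
  refine ⟨#X, ?_⟩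
  rintro c ⟨A', rfl⟩
  exact Cardinal.mk_set_le _

lemma stmt11_fnu_le_nu {A : Set X} (h : FinNonUrysohn A) : #↥A ≤ nuNumber X := by
  have h1 := le_ciSup stmt11_bddAbove_nu (⟨A, h⟩ : {A : Set X // FinNonUrysohn A})
  exact h1.trans le_add_self

lemma stmt11_two_le_nu (x₀ : X) : 2 ≤ nuNumber X := by
  have hA : FinNonUrysohn ({x₀} : Set X) := by
    refine ⟨⟨x₀, rfl⟩, fun F hF hFne hFfin U hU => ⟨x₀, ?_⟩⟩
    simp only [Set.mem_iInter]
    intro x hx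
    have hx0 : x = x₀ := hF hx
    subst hx0
    exact subset_closure (hU x hx).2
  have h1 : (1 : Cardinal) ≤ ⨆ A : {A : Set X // FinNonUrysohn A}, #↥A.1 := by
    have := le_ciSup stmt11_bddAbove_nu (⟨{x₀}, hA⟩ : {A : Set X // FinNonUrysohn A})
    simpa using this
  have : (2 : Cardinal) = 1 + 1 := by norm_num
  rw [nuNumber, this]
  exact add_le_add_right h1 1

lemma stmt11_kappa_spec (X : Type u) [TopologicalSpace X] :
    ℵ₀ ≤ kappaInv X ∧ ∀ x : X, ∃ V : Set (Set X), #↥V ≤ kappaInv X ∧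
      (∀ W ∈ V, IsClosed W ∧ W ∈ nhds x) ∧
      ∀ U : Set X, IsOpen U → x ∈ U → ∃ W ∈ V, W ⊆ closure U := by
  have h := csInf_mem (s := {κ : Cardinal.{u} | ℵ₀ ≤ κ ∧ ∀ x : X, ∃ V : Set (Set X),
      #↥V ≤ κ ∧ (∀ W ∈ V, IsClosed W ∧ W ∈ nhds x) ∧
      ∀ U : Set X, IsOpen U → x ∈ U → ∃ W ∈ V, W ⊆ closure U}) ?_
  · exact h
  refine ⟨max ℵ₀ (2 ^ #X), ?_⟩
  show ℵ₀ ≤ max ℵ₀ (2 ^ #X) ∧ _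
  refine ⟨le_max_left _ _, fun x => ?_⟩
  refine ⟨{C | ∃ U : Set X, IsOpen U ∧ x ∈ U ∧ C = closure U}, ?_, ?_, ?_⟩
  · refine (Cardinal.mk_set_le _).trans ?_
    rw [Cardinal.mk_set]
    exact le_max_right _ _
  · rintro W ⟨U, hUo, hxU, rfl⟩
    exact ⟨isClosed_closure, Filter.mem_of_superset (hUo.mem_nhds hxU) subset_closure⟩
  · intro U hUo hxU
    exact ⟨closure U, ⟨U, hUo, hxU, rfl⟩, subset_rfl⟩

lemma stmt11_aL_spec (X : Type u) [TopologicalSpace X] :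
    ℵ₀ ≤ aLdeg X ∧ ∀ 𝒰 : Set (Set X), (∀ U ∈ 𝒰, IsOpen U) → ⋃₀ 𝒰 = Set.univ →
      ∃ 𝒱 ⊆ 𝒰, #↥𝒱 ≤ aLdeg X ∧ (⋃ V ∈ 𝒱, closure V) = Set.univ := by
  have h := csInf_mem (s := {τ : Cardinal.{u} | ℵ₀ ≤ τ ∧ ∀ 𝒰 : Set (Set X),
      (∀ U ∈ 𝒰, IsOpen U) → ⋃₀ 𝒰 = Set.univ →
      ∃ 𝒱 ⊆ 𝒰, #↥𝒱 ≤ τ ∧ (⋃ V ∈ 𝒱, closure V) = Set.univ}) ?_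
  · exact h
  refine ⟨max ℵ₀ (2 ^ #X), ?_⟩
  show ℵ₀ ≤ max ℵ₀ (2 ^ #X) ∧ _
  refine ⟨le_max_left _ _, fun 𝒰 h𝒰 hcov => ⟨𝒰, subset_rfl, ?_, ?_⟩⟩
  · refine (Cardinal.mk_set_le _).trans ?_
    rw [Cardinal.mk_set]
    exact le_max_right _ _
  · rw [Set.eq_univ_iff_forall]
    intro x
    have : x ∈ ⋃₀ 𝒰 := hcov ▸ Set.mem_univ x
    obtain ⟨U, hU, hxU⟩ := this
    exact Set.mem_iUnion₂.2 ⟨U, hU, subset_closure hxU⟩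

lemma stmt11_thetaCl_mono {A B : Set X} (h : A ⊆ B) : thetaCl A ⊆ thetaCl B :=
  fun _z hz U hUo hzU => (hz U hUo hzU).mono (Set.inter_subset_inter_right _ h)

lemma stmt11_subset_thetaCl {A : Set X} : A ⊆ thetaCl A :=
  fun z hz U hUo hzU => ⟨z, subset_closure hzU, hz⟩

/-- Key lemma: the cardinality of the θ-closure is at most `|S|^κ₁ · nu(X)`. -/
lemma stmt11_card_thetaCl_le (ι₁ : Type u) [Infinite ι₁] (V : X → Set (Set X))
    (hVc : ∀ x, ∀ W ∈ V x, IsClosed W ∧ W ∈ nhds x)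
    (hVf : ∀ x, ∀ U : Set X, IsOpen U → x ∈ U → ∃ W ∈ V x, W ⊆ closure U)
    (hVe : ∀ x : X, ∃ e : ι₁ → Set X, (∀ i, e i ∈ V x) ∧ ∀ W ∈ V x, ∃ i, e i = W)
    (S : Set X) :
    #↥(thetaCl S) ≤ #↥S ^ #ι₁ * nuNumber X := by
  classical
  choose e he1 he2 using hVe
  -- finite intersections of the `e x i` are closed neighborhoods meeting `S`
  have hkey : ∀ z : X, z ∈ thetaCl S → ∀ F : Finset ι₁,
      ((⋂ i ∈ F, e z i) ∩ S).Nonempty := by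
    intro z hz F
    have hnhds : (⋂ i ∈ F, e z i) ∈ nhds z :=
      (Filter.biInter_finset_mem F).2 fun i _ => (hVc z _ (he1 z i)).2
    have hcl : IsClosed (⋂ i ∈ F, e z i) := isClosed_biInter fun i _ => (hVc z _ (he1 z i)).1
    have h1 := hz (interior (⋂ i ∈ F, e z i)) isOpen_interior
      (mem_interior_iff_mem_nhds.2 hnhds)
    exact h1.mono (Set.inter_subset_inter_left _ (closure_minimal interior_subset hcl))
  have haux : ∀ (z : ↥(thetaCl S)) (F : Finset ι₁),
      ∃ s : ↥S, (s : X) ∈ ⋂ i ∈ F, e (z : X) i := by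
    intro z F
    obtain ⟨y, hy1, hy2⟩ := hkey z z.2 F
    exact ⟨⟨y, hy2⟩, hy1⟩
  choose a ha using haux
  -- fibers of `a` are finitely non-Urysohn
  have hfib : ∀ g : Finset ι₁ → ↥S, #{z : ↥(thetaCl S) // a z = g} ≤ nuNumber X := by
    intro g
    have hmkeq : #{z : ↥(thetaCl S) // a z = g}
        = #↥(Subtype.val '' {z : ↥(thetaCl S) | a z = g}) :=
      (Cardinal.mk_image_eq Subtype.val_injective).symm
    rw [hmkeq]
    rcases Set.eq_empty_or_nonempty (Subtype.val '' {z : ↥(thetaCl S) | a z = g}) with hE | hNE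
    · rw [hE]
      simp
    · refine stmt11_fnu_le_nu ⟨hNE, ?_⟩
      intro F hF hFne hFfin U hU
      have hsel : ∀ y ∈ F, ∃ i : ι₁, e y i ⊆ closure (U y) := by
        intro y hy
        obtain ⟨W, hW1, hW2⟩ := hVf y (U y) (hU y hy).1 (hU y hy).2
        obtain ⟨i, hi⟩ := he2 y W hW1
        exact ⟨i, hi ▸ hW2⟩
      choose! isel hisel using hsel
      set I₀ : Finset ι₁ := hFfin.toFinset.image isel with hI₀
      refine ⟨(g I₀ : X), Set.mem_iInter₂.2 fun y hy => ?_⟩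
      obtain ⟨z, hz1, hz2⟩ := hF hy
      have hmem : (a z I₀ : X) ∈ ⋂ i ∈ I₀, e (z : X) i := ha z I₀
      have hiI : isel y ∈ I₀ := Finset.mem_image.2 ⟨y, hFfin.mem_toFinset.2 hy, rfl⟩
      have h3 : (a z I₀ : X) ∈ e (z : X) (isel y) := Set.mem_iInter₂.1 hmem (isel y) hiI
      rw [hz1] at h3
      rw [hz2] at h3
      exact hisel y hy h3
  -- counting
  have h0 : #↥(thetaCl S) = Cardinal.sum fun g : Finset ι₁ → ↥S =>
      #{z : ↥(thetaCl S) // a z = g} := by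
    rw [← Cardinal.mk_sigma]
    exact (Cardinal.mk_congr (Equiv.sigmaFiberEquiv a)).symm
  calc #↥(thetaCl S)
      = Cardinal.sum fun g : Finset ι₁ → ↥S => #{z : ↥(thetaCl S) // a z = g} := h0
    _ ≤ Cardinal.sum fun _ : Finset ι₁ → ↥S => nuNumber X := Cardinal.sum_le_sum _ _ hfib
    _ = #(Finset ι₁ → ↥S) * nuNumber X := Cardinal.sum_const' _ _
    _ = #↥S ^ #ι₁ * nuNumber X := by
        rw [← Cardinal.power_def, Cardinal.mk_finset_of_infinite]

/-- Pool of finite intersections of chosen closed neighborhoods of points of `G`. -/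
def stmt11Dp (V : X → Set (Set X)) (G : Set X) : Set (Set X) :=
  {s | ∃ p : ℕ → X × Set X, (∀ j : ℕ, (p j).1 ∈ G ∧ (p j).2 ∈ V (p j).1) ∧
    ∃ k : ℕ, s = ⋂ j ∈ Finset.range (k + 1), (p j).2}

lemma stmt11Dp_mono {V : X → Set (Set X)} {G G' : Set X} (h : G ⊆ G') :
    stmt11Dp V G ⊆ stmt11Dp V G' := by
  rintro s ⟨p, hp, k, rfl⟩
  exact ⟨p, fun j => ⟨h (hp j).1, (hp j).2⟩, k, rfl⟩

lemma stmt11_mem_Dp_single {V : X → Set (Set X)} {G : Set X} {x : X} {W : Set X}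
    (hx : x ∈ G) (hW : W ∈ V x) : W ∈ stmt11Dp V G := by
  refine ⟨fun _ => (x, W), fun _ => ⟨hx, hW⟩, 0, ?_⟩
  simp

lemma stmt11_card_Dp_le {V : X → Set (Set X)} {G : Set X} {c : Cardinal.{u}}
    (hc : ℵ₀ ≤ c) (hG : #↥G ≤ c) (hV : ∀ x, #↥(V x) ≤ c) :
    #↥(stmt11Dp V G) ≤ c ^ (ℵ₀ : Cardinal.{u}) := by
  classical
  have hc0 : c ≠ 0 := (Cardinal.aleph0_pos.trans_le hc).ne'
  set Q : Set (X × Set X) := {q | q.1 ∈ G ∧ q.2 ∈ V q.1} with hQdef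
  have hQc : #↥Q ≤ c := by
    have hQeq : Q = ⋃ x : ↥G, (fun W => ((x : X), W)) '' V (x : X) := by
      ext q
      constructor
      · rintro ⟨h1, h2⟩
        exact Set.mem_iUnion.2 ⟨⟨q.1, h1⟩, ⟨q.2, h2, by simp⟩⟩
      · rintro hq
        obtain ⟨x, W, hW, rfl⟩ := Set.mem_iUnion.1 hq
        exact ⟨x.2, hW⟩
    rw [hQeq]
    refine (Cardinal.mk_iUnion_le _).trans ?_
    have h1 : #↥G * (⨆ x : ↥G, #↥((fun W => ((x : X), W)) '' V (x : X))) ≤ c * c := by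
      refine mul_le_mul' hG ?_
      exact ciSup_le' fun x => (Cardinal.mk_image_le).trans (hV _)
    exact h1.trans (le_of_eq (Cardinal.mul_eq_self hc))
  have hsub : stmt11Dp V G ⊆ ⋃ k : ULift.{u} ℕ,
      Set.range (fun p : ℕ → ↥Q => ⋂ j ∈ Finset.range (k.down + 1), ((p j : X × Set X)).2) := by
    rintro s ⟨p, hp, k, rfl⟩
    exact Set.mem_iUnion.2 ⟨⟨k⟩, ⟨fun j => ⟨p j, hp j⟩, rfl⟩⟩
  have harrow : #(ℕ → ↥Q) ≤ c ^ (ℵ₀ : Cardinal.{u}) := by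
    have : #(ℕ → ↥Q) = #↥Q ^ (ℵ₀ : Cardinal.{u}) := by
      rw [Cardinal.mk_arrow]
      simp
    rw [this]
    exact Cardinal.power_le_power_right hQc
  have hpow : ℵ₀ ≤ c ^ (ℵ₀ : Cardinal.{u}) := by
    refine hc.trans ?_
    calc c = c ^ (1 : Cardinal.{u}) := (Cardinal.power_one c).symm
      _ ≤ c ^ (ℵ₀ : Cardinal.{u}) :=
        Cardinal.power_le_power_left hc0 Cardinal.one_le_aleph0
  calc #↥(stmt11Dp V G) ≤ _ := Cardinal.mk_le_mk_of_subset hsub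
    _ ≤ #(ULift.{u} ℕ) * ⨆ k : ULift.{u} ℕ,
        #↥(Set.range (fun p : ℕ → ↥Q => ⋂ j ∈ Finset.range (k.down + 1), ((p j : X × Set X)).2)) :=
      Cardinal.mk_iUnion_le _
    _ ≤ ℵ₀ * c ^ (ℵ₀ : Cardinal.{u}) := by
      refine mul_le_mul' Cardinal.mk_le_aleph0 ?_
      exact ciSup_le' fun k => (Cardinal.mk_range_le).trans harrow
    _ = c ^ (ℵ₀ : Cardinal.{u}) := by
      rw [Cardinal.mul_eq_max (le_refl ℵ₀) hpow]
      exact max_eq_right hpow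

open Classical in
noncomputable def stmt11pick (x₀ : X) {ι : Type u} (f : ι → Set X) : X :=
  if h : (Set.univ \ ⋃ i, f i).Nonempty then h.choose else x₀

lemma stmt11pick_spec {x₀ : X} {ι : Type u} {f : ι → Set X}
    (h : (Set.univ \ ⋃ i, f i).Nonempty) : stmt11pick x₀ f ∈ Set.univ \ ⋃ i, f i := by
  classical
  rw [stmt11pick]
  rw [dif_pos h]
  exact h.choose_spec

def stmt11picks (V : X → Set (Set X)) (x₀ : X) (ι : Type u) (G : Set X) : Set X :=
  (fun f => stmt11pick x₀ f) '' {f : ι → Set X | ∀ i, f i ∈ stmt11Dp V G}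

def stmt11step (V : X → Set (Set X)) (x₀ : X) (ι : Type u) (G : Set X) : Set X :=
  insert x₀ (G ∪ thetaCl G ∪ stmt11picks V x₀ ι G)

lemma stmt11_subset_step {V : X → Set (Set X)} {x₀ : X} {ι : Type u} {G : Set X} :
    G ⊆ stmt11step V x₀ ι G :=
  fun _z hz => Set.mem_insert_of_mem _ (Or.inl (Or.inl hz))

lemma stmt11_thetaCl_subset_step {V : X → Set (Set X)} {x₀ : X} {ι : Type u} {G : Set X} :
    thetaCl G ⊆ stmt11step V x₀ ι G :=
  fun _z hz => Set.mem_insert_of_mem _ (Or.inl (Or.inr hz))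

lemma stmt11_picks_subset_step {V : X → Set (Set X)} {x₀ : X} {ι : Type u} {G : Set X} :
    stmt11picks V x₀ ι G ⊆ stmt11step V x₀ ι G :=
  fun _z hz => Set.mem_insert_of_mem _ (Or.inr hz)

noncomputable def stmt11chain (V : X → Set (Set X)) (x₀ : X) (ι : Type u) (T : Type u)
    [LinearOrder T] [WellFoundedLT T] : T → Set X :=
  (IsWellFounded.wf (α := T) (r := (· < ·))).fix
    (fun t ih => stmt11step V x₀ ι (⋃ s : {s : T // s < t}, ih s s.2))

lemma stmt11chain_eq (V : X → Set (Set X)) (x₀ : X) (ι : Type u) (T : Type u)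
    [LinearOrder T] [WellFoundedLT T] (t : T) :
    stmt11chain V x₀ ι T t
      = stmt11step V x₀ ι (⋃ s : {s : T // s < t}, stmt11chain V x₀ ι T s) :=
  WellFounded.fix_eq _ _ t

lemma stmt11chain_mono (V : X → Set (Set X)) (x₀ : X) (ι : Type u) (T : Type u)
    [LinearOrder T] [WellFoundedLT T] {s t : T} (h : s ≤ t) :
    stmt11chain V x₀ ι T s ⊆ stmt11chain V x₀ ι T t := by
  rcases eq_or_lt_of_le h with rfl | hlt
  · exact subset_rfl
  · rw [stmt11chain_eq V x₀ ι T t]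
    refine subset_trans ?_ stmt11_subset_step
    exact Set.subset_iUnion (fun s' : {s' : T // s' < t} => stmt11chain V x₀ ι T s') ⟨s, hlt⟩

lemma stmt11_exists_upper {o : Ordinal.{u}} (ho : Order.IsSuccLimit o) {A : Type u} (hA : #A < o.cof)
    (g : A → o.ToType) : ∃ t : o.ToType, ∀ a, g a < t := by
  letI : IsWellOrder o.ToType (· < ·) := isWellOrder_lt
  set f : A → Ordinal.{u} :=
    fun a => Order.succ (Ordinal.typein (α := o.ToType) (· < ·) (g a)) with hf0
  have hf : ∀ a, f a < o := fun a => ho.succ_lt (Ordinal.typein_lt_self (g a))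
  have hsup : (⨆ a, f a) < o := Ordinal.iSup_lt_ord hA hf
  have hsup' : (⨆ a, f a) < Ordinal.type (α := o.ToType) (· < ·) := by
    rw [Ordinal.type_toType]; exact hsup
  refine ⟨Ordinal.enum (α := o.ToType) (· < ·) ⟨⨆ a, f a, hsup'⟩, fun a => ?_⟩
  have h1 : Ordinal.typein (α := o.ToType) (· < ·) (g a) < ⨆ a, f a :=
    lt_of_lt_of_le (Order.lt_succ _) (Ordinal.le_iSup f a)
  have h2 : Ordinal.typein (α := o.ToType) (· < ·)
      (Ordinal.enum (α := o.ToType) (· < ·) ⟨⨆ a, f a, hsup'⟩) = ⨆ a, f a :=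
    Ordinal.typein_enum _ _
  rw [← h2] at h1
  exact (Ordinal.typein_lt_typein (α := o.ToType) (· < ·)).1 h1

lemma stmt11_construction (x₀ : X) (V : X → Set (Set X)) (ι T : Type u)
    [LinearOrder T] [WellFoundedLT T]
    (hVc : ∀ x, ∀ W ∈ V x, IsClosed W ∧ W ∈ nhds x)
    (hVf : ∀ x, ∀ U : Set X, IsOpen U → x ∈ U → ∃ W ∈ V x, W ⊆ closure U)
    (hVι : ∀ x, #↥(V x) ≤ #ι)
    (hι : ℵ₀ ≤ #ι)
    (hTub : ∀ {A : Type u}, #A ≤ #ι → ∀ g : A → T, ∃ t, ∀ a, g a < t)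
    (μ : Cardinal.{u}) (hμ : ℵ₀ ≤ μ) (hTμ : #T ≤ μ) (hVμ : ∀ x, #↥(V x) ≤ μ)
    (hθ : ∀ S : Set X, #↥S ≤ μ → #↥(thetaCl S) ≤ μ)
    (hpow0 : μ ^ (ℵ₀ : Cardinal.{u}) ≤ μ) (hpowι : μ ^ #ι ≤ μ) :
    ∃ H : Set X, x₀ ∈ H ∧ thetaCl H ⊆ H ∧
      (∀ 𝒱 : Set (Set X), 𝒱 ⊆ stmt11Dp V H → 𝒱.Nonempty → #↥𝒱 ≤ #ι →
        (Set.univ \ ⋃₀ 𝒱).Nonempty → ∃ p ∈ H, p ∉ ⋃₀ 𝒱) ∧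
      #↥H ≤ μ := by
  classical
  have hTne : Nonempty T := by
    obtain ⟨t, _⟩ := hTub (A := ULift.{u} Empty)
      (by simpa using zero_le _) (fun a => (a.down).elim)
    exact ⟨t⟩
  set H : Set X := ⋃ t : T, stmt11chain V x₀ ι T t with hH
  -- cardinality of each stage
  have hcard : ∀ t : T, #↥(stmt11chain V x₀ ι T t) ≤ μ := by
    intro t
    refine (IsWellFounded.wf (α := T) (r := (· < ·))).induction
      (C := fun t => #↥(stmt11chain V x₀ ι T t) ≤ μ) t ?_
    intro t ih
    rw [stmt11chain_eq]
    set G : Set X := ⋃ s : {s : T // s < t}, stmt11chain V x₀ ι T s with hG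
    have hGμ : #↥G ≤ μ := by
      rcases isEmpty_or_nonempty {s : T // s < t} with hE | hNE
      · rw [hG, Set.iUnion_of_empty]
        simpa using zero_le _
      · refine (Cardinal.mk_iUnion_le _).trans ?_
        refine (mul_le_mul' ((Cardinal.mk_subtype_le _).trans hTμ)
          (ciSup_le' fun s : {s : T // s < t} => ih s.1 s.2)).trans ?_
        exact le_of_eq (Cardinal.mul_eq_self hμ)
    have hDpμ : #↥(stmt11Dp V G) ≤ μ := (stmt11_card_Dp_le hμ hGμ hVμ).trans hpow0
    have hpicksμ : #↥(stmt11picks V x₀ ι G) ≤ μ := by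
      refine (Cardinal.mk_image_le).trans ?_
      have hinj : Function.Injective
          (fun f : ↥{f : ι → Set X | ∀ i, f i ∈ stmt11Dp V G} =>
            fun i => (⟨f.1 i, f.2 i⟩ : ↥(stmt11Dp V G))) := by
        intro f g h
        apply Subtype.ext
        funext i
        exact congrArg Subtype.val (congrFun h i)
      refine (Cardinal.mk_le_of_injective hinj).trans ?_
      have : #(ι → ↥(stmt11Dp V G)) = #↥(stmt11Dp V G) ^ #ι := Cardinal.power_def _ _ ▸ rfl
      rw [this]
      exact (Cardinal.power_le_power_right hDpμ).trans hpowι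
    have hθμ : #↥(thetaCl G) ≤ μ := hθ G hGμ
    refine (Cardinal.mk_insert_le).trans ?_
    refine Cardinal.add_le_of_le hμ ?_ (Cardinal.one_le_aleph0.trans hμ)
    refine (Cardinal.mk_union_le _ _).trans ?_
    refine Cardinal.add_le_of_le hμ ?_ hpicksμ
    exact (Cardinal.mk_union_le _ _).trans (Cardinal.add_le_of_le hμ hGμ hθμ)
  -- x₀ is everywhere
  have hx₀ : ∀ t : T, x₀ ∈ stmt11chain V x₀ ι T t := by
    intro t
    rw [stmt11chain_eq]
    exact Set.mem_insert _ _
  have hx₀H : x₀ ∈ H := Set.mem_iUnion.2 ⟨Classical.arbitrary T, hx₀ _⟩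
  -- θ-closedness
  have hθH : thetaCl H ⊆ H := by
    intro z hz
    have hWmeet : ∀ W : ↥(V z), ∃ t : T, ((W : Set X) ∩ stmt11chain V x₀ ι T t).Nonempty := by
      intro W
      have hU := hz (interior (W : Set X)) isOpen_interior
        (mem_interior_iff_mem_nhds.2 (hVc z _ W.2).2)
      have h2 : (((W : Set X)) ∩ H).Nonempty :=
        hU.mono (Set.inter_subset_inter_left _
          (closure_minimal interior_subset (hVc z _ W.2).1))
      obtain ⟨y, hy1, hy2⟩ := h2
      obtain ⟨t, ht⟩ := Set.mem_iUnion.1 hy2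
      exact ⟨t, ⟨y, hy1, ht⟩⟩
    choose gst hgst using hWmeet
    obtain ⟨t, ht⟩ := hTub (hVι z) gst
    have hz' : z ∈ thetaCl (stmt11chain V x₀ ι T t) := by
      intro U hUo hzU
      obtain ⟨W, hW1, hW2⟩ := hVf z U hUo hzU
      have hne := hgst ⟨W, hW1⟩
      have hsub : stmt11chain V x₀ ι T (gst ⟨W, hW1⟩) ⊆ stmt11chain V x₀ ι T t :=
        stmt11chain_mono V x₀ ι T (le_of_lt (ht ⟨W, hW1⟩))
      exact hne.mono (Set.inter_subset_inter hW2 hsub)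
    obtain ⟨t', ht'⟩ := hTub (A := PUnit.{u+1})
      (by simpa using Cardinal.one_le_aleph0.trans hι) (fun _ => t)
    have hsub2 : thetaCl (stmt11chain V x₀ ι T t) ⊆ stmt11chain V x₀ ι T t' := by
      rw [stmt11chain_eq V x₀ ι T t']
      refine subset_trans (stmt11_thetaCl_mono ?_) stmt11_thetaCl_subset_step
      exact Set.subset_iUnion (fun s : {s : T // s < t'} => stmt11chain V x₀ ι T s)
        ⟨t, ht' PUnit.unit⟩
    exact Set.mem_iUnion.2 ⟨t', hsub2 hz'⟩
  -- the picking property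
  have hpicksH : ∀ 𝒱 : Set (Set X), 𝒱 ⊆ stmt11Dp V H → 𝒱.Nonempty → #↥𝒱 ≤ #ι →
      (Set.univ \ ⋃₀ 𝒱).Nonempty → ∃ p ∈ H, p ∉ ⋃₀ 𝒱 := by
    intro 𝒱 h𝒱sub h𝒱ne h𝒱card hcompl
    obtain ⟨e, he1, he2⟩ := stmt11_exists_surj_onto h𝒱ne h𝒱card
    have hUeq : (⋃ i, e i) = ⋃₀ 𝒱 := by
      ext x
      constructor
      · rintro hx
        obtain ⟨i, hi⟩ := Set.mem_iUnion.1 hx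
        exact ⟨e i, he1 i, hi⟩
      · rintro ⟨s, hs, hx⟩
        obtain ⟨i, rfl⟩ := he2 s hs
        exact Set.mem_iUnion.2 ⟨i, hx⟩
    have hst : ∀ i : ι, ∃ p : ℕ → X × Set X,
        (∀ j, (p j).1 ∈ H ∧ (p j).2 ∈ V (p j).1) ∧
        ∃ k : ℕ, e i = ⋂ j ∈ Finset.range (k + 1), (p j).2 := fun i => h𝒱sub (he1 i)
    choose p hp k hk using hst
    have hstage : ∀ pr : ι × ULift.{u} ℕ, ∃ t : T,
        (p pr.1 pr.2.down).1 ∈ stmt11chain V x₀ ι T t := by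
      intro pr
      exact Set.mem_iUnion.1 (hp pr.1 pr.2.down).1
    choose gst hgst using hstage
    have hAcard : #(ι × ULift.{u} ℕ) ≤ #ι := by
      have h1 : #(ι × ULift.{u} ℕ) = #ι * #(ULift.{u} ℕ) := by
        rw [Cardinal.mk_prod, Cardinal.lift_id, Cardinal.lift_id]
      rw [h1]
      refine (mul_le_mul' le_rfl Cardinal.mk_le_aleph0).trans ?_
      rw [Cardinal.mul_eq_max hι (le_refl ℵ₀)]
      exact max_le le_rfl hι
    obtain ⟨t, ht⟩ := hTub hAcard gst
    obtain ⟨t', ht'⟩ := hTub (A := PUnit.{u+1})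
      (by simpa using Cardinal.one_le_aleph0.trans hι) (fun _ => t)
    have hDp' : ∀ i, e i ∈ stmt11Dp V (⋃ s : {s : T // s < t'}, stmt11chain V x₀ ι T s) := by
      intro i
      refine ⟨p i, fun j => ⟨?_, (hp i j).2⟩, k i, hk i⟩
      have h1 := hgst (i, ⟨j⟩)
      have h2 : stmt11chain V x₀ ι T (gst (i, ⟨j⟩)) ⊆ stmt11chain V x₀ ι T t :=
        stmt11chain_mono V x₀ ι T (le_of_lt (ht _))
      exact Set.mem_iUnion.2 ⟨⟨t, ht' PUnit.unit⟩, h2 h1⟩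
    have hpt : stmt11pick x₀ e ∈
        stmt11picks V x₀ ι (⋃ s : {s : T // s < t'}, stmt11chain V x₀ ι T s) :=
      ⟨e, hDp', rfl⟩
    have hptH : stmt11pick x₀ e ∈ H := by
      refine Set.mem_iUnion.2 ⟨t', ?_⟩
      rw [stmt11chain_eq V x₀ ι T t']
      exact stmt11_picks_subset_step hpt
    have hspec := stmt11pick_spec (x₀ := x₀) (f := e) (by rw [hUeq]; exact hcompl)
    refine ⟨stmt11pick x₀ e, hptH, ?_⟩
    rw [← hUeq]
    exact hspec.2
  -- cardinality of H
  have hHcard : #↥H ≤ μ := by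
    refine (Cardinal.mk_iUnion_le _).trans ?_
    refine (mul_le_mul' hTμ (ciSup_le' fun t => hcard t)).trans ?_
    exact le_of_eq (Cardinal.mul_eq_self hμ)
  exact ⟨H, hx₀H, hθH, hpicksH, hHcard⟩

end Statement11Aux


theorem statement11 (X : Type u) [TopologicalSpace X] :
    #X ≤ nuNumber X ^ (kappaInv X * aLdeg X) := by
  classical
  rcases isEmpty_or_nonempty X with hX | hX
  · rw [Cardinal.mk_eq_zero X]
    exact zero_le
  obtain ⟨x₀⟩ := hX
  obtain ⟨hκ1, hκspec⟩ := stmt11_kappa_spec X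
  obtain ⟨hlam, hlamspec⟩ := stmt11_aL_spec X
  choose V hVcard hVc hVf using hκspec
  set n : Cardinal.{u} := nuNumber X with hn
  set κ1 : Cardinal.{u} := kappaInv X with hκ1def
  set lam : Cardinal.{u} := aLdeg X with hlamdef
  set κ : Cardinal.{u} := κ1 * lam with hκdef
  have h2n : 2 ≤ n := stmt11_two_le_nu x₀
  have hn0 : n ≠ 0 := by
    intro h
    rw [h] at h2n
    exact absurd h2n (by norm_num)
  have hκ1κ : κ1 ≤ κ := le_mul_of_one_le_right zero_le (le_trans (by norm_num) hlam)
  have hlamκ : lam ≤ κ := le_mul_of_one_le_left zero_le (le_trans (by norm_num) hκ1)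
  have hκinf : ℵ₀ ≤ κ := hκ1.trans hκ1κ
  set μ : Cardinal.{u} := n ^ κ with hμdef
  have h2κμ : (2 : Cardinal.{u}) ^ κ ≤ μ := Cardinal.power_le_power_right h2n
  have hκμ : κ ≤ μ := le_of_lt ((Cardinal.cantor κ).trans_le h2κμ)
  have hμinf : ℵ₀ ≤ μ := hκinf.trans hκμ
  have hnμ : n ≤ μ := by
    calc n = n ^ (1 : Cardinal.{u}) := (Cardinal.power_one n).symm
      _ ≤ μ := Cardinal.power_le_power_left hn0 (le_trans (by norm_num) hκinf)
  have hμpow : ∀ c : Cardinal.{u}, ℵ₀ ≤ c → c ≤ κ → μ ^ c = μ := by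
    intro c hc hcκ
    rw [hμdef, ← Cardinal.power_mul]
    congr 1
    rw [Cardinal.mul_eq_max hκinf hc]
    exact max_eq_left hcκ
  -- index types
  set ι : Type u := κ.ord.ToType with hιdef
  have hικ : #ι = κ := by rw [hιdef, Cardinal.mk_toType, Cardinal.card_ord]
  set T : Type u := (Order.succ κ).ord.ToType with hTdef
  have hreg := Cardinal.isRegular_succ hκinf
  have hTcard : #T = Order.succ κ := by rw [hTdef, Cardinal.mk_toType, Cardinal.card_ord]
  have hTub : ∀ {A : Type u}, #A ≤ #ι → ∀ g : A → T, ∃ t, ∀ a, g a < t := by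
    intro A hA g
    refine stmt11_exists_upper
      (Cardinal.isSuccLimit_ord (hκinf.trans (le_of_lt (Order.lt_succ κ)))) ?_ g
    rw [hreg.cof_eq]
    exact lt_of_le_of_lt (hA.trans_eq hικ) (Order.lt_succ κ)
  have hTμ : #T ≤ μ := by
    rw [hTcard]
    exact (Order.succ_le_of_lt (Cardinal.cantor κ)).trans h2κμ
  -- θ-closure cardinality control
  have hθ : ∀ S : Set X, #↥S ≤ μ → #↥(thetaCl S) ≤ μ := by
    intro S hS
    have hι1card : #(κ1.ord.ToType) = κ1 := by rw [Cardinal.mk_toType, Cardinal.card_ord]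
    have hι1inf : Infinite κ1.ord.ToType := by
      rw [Cardinal.infinite_iff, hι1card]
      exact hκ1
    have hVe : ∀ x : X, ∃ e : κ1.ord.ToType → Set X,
        (∀ i, e i ∈ V x) ∧ ∀ W ∈ V x, ∃ i, e i = W := by
      intro x
      have hVne : (V x).Nonempty := by
        obtain ⟨W, hW, _⟩ := hVf x Set.univ isOpen_univ (Set.mem_univ x)
        exact ⟨W, hW⟩
      refine stmt11_exists_surj_onto hVne ?_
      rw [hι1card]
      exact hVcard x
    refine (stmt11_card_thetaCl_le κ1.ord.ToType V hVc hVf hVe S).trans ?_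
    rw [hι1card]
    calc #↥S ^ κ1 * n ≤ μ ^ κ1 * μ := mul_le_mul' (Cardinal.power_le_power_right hS) hnμ
      _ = μ * μ := by rw [hμpow κ1 hκ1 hκ1κ]
      _ = μ := Cardinal.mul_eq_self hμinf
  -- run the closing-off construction
  obtain ⟨H, hx₀H, hθH, hpicksH, hHcard⟩ :=
    stmt11_construction x₀ V ι T hVc hVf
      (fun x => (hVcard x).trans (hκ1κ.trans_eq hικ.symm))
      (hικ ▸ hκinf) hTub μ hμinf hTμ
      (fun x => (hVcard x).trans (hκ1κ.trans hκμ)) hθ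
      ((hμpow ℵ₀ le_rfl hκinf).le)
      ((hμpow (#ι) (hικ ▸ hκinf) hικ.le).le)
  -- it suffices to show H = univ
  suffices hcov : H = Set.univ by
    calc #X = #↥(Set.univ : Set X) := Cardinal.mk_univ.symm
      _ = #↥H := by rw [hcov]
      _ ≤ μ := hHcard
  by_contra hne
  have hexq : ∃ q, q ∉ H := by
    by_contra h
    push_neg at h
    exact hne (Set.eq_univ_of_forall h)
  obtain ⟨q, hq⟩ := hexq
  have hqθ : q ∉ thetaCl H := fun h => hq (hθH h)
  have hO : ∃ O : Set X, IsOpen O ∧ q ∈ O ∧ closure O ∩ H = ∅ := by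
    by_contra h
    push_neg at h
    exact hqθ fun U hUo hqU => h U hUo hqU
  obtain ⟨O, hOo, hqO, hOH⟩ := hO
  -- every point of H has a small closed neighborhood avoiding q
  have hWx : ∀ x ∈ H, ∃ W ∈ V x, q ∉ W := by
    intro x hx
    have hxO : x ∉ closure O := fun hc => (Set.eq_empty_iff_forall_notMem.1 hOH x) ⟨hc, hx⟩
    obtain ⟨W, hW1, hW2⟩ := hVf x (closure O)ᶜ isClosed_closure.isOpen_compl hxO
    refine ⟨W, hW1, fun hqW => ?_⟩
    have h1 : q ∈ closure (closure O)ᶜ := hW2 hqW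
    obtain ⟨y, hyO, hyc⟩ := (_root_.mem_closure_iff.1 h1) O hOo hqO
    exact hyc (subset_closure hyO)
  choose! Wf hWf1 hWf2 using hWx
  -- every point outside H has an open neighborhood whose closure misses H
  have hGz : ∀ z, z ∉ H → ∃ G : Set X, IsOpen G ∧ z ∈ G ∧ closure G ∩ H = ∅ := by
    intro z hz
    have hzθ : z ∉ thetaCl H := fun h => hz (hθH h)
    by_contra h
    push_neg at h
    exact hzθ fun U hUo hzU => h U hUo hzU
  choose! Gf hGf1 hGf2 hGf3 using hGz
  -- the open cover
  set 𝒰 : Set (Set X) := ((fun x => interior (Wf x)) '' H) ∪ (Gf '' Hᶜ) with h𝒰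
  have h𝒰open : ∀ U ∈ 𝒰, IsOpen U := by
    rintro U (⟨x, hx, rfl⟩ | ⟨z, hz, rfl⟩)
    · exact isOpen_interior
    · exact hGf1 z hz
  have h𝒰cov : ⋃₀ 𝒰 = Set.univ := by
    rw [Set.eq_univ_iff_forall]
    intro x
    by_cases hx : x ∈ H
    · exact ⟨interior (Wf x), Or.inl ⟨x, hx, rfl⟩,
        mem_interior_iff_mem_nhds.2 (hVc x _ (hWf1 x hx)).2⟩
    · exact ⟨Gf x, Or.inr ⟨x, hx, rfl⟩, hGf2 x hx⟩
  obtain ⟨𝒱, h𝒱𝒰, h𝒱card, h𝒱cov⟩ := hlamspec 𝒰 h𝒰open h𝒰cov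
  -- the recorded family
  set 𝒱₁ : Set (Set X) := {Vv ∈ 𝒱 | ∃ x ∈ H, Vv = interior (Wf x)} with h𝒱₁
  have hxselx : ∀ Vv : Set X, ∃ x : X, Vv ∈ 𝒱₁ → (x ∈ H ∧ Vv = interior (Wf x)) := by
    intro Vv
    by_cases h : Vv ∈ 𝒱₁
    · obtain ⟨_, x, hx, hVx⟩ := h
      exact ⟨x, fun _ => ⟨hx, hVx⟩⟩
    · exact ⟨x₀, fun hc => absurd hc h⟩
  choose xsel hxsel using hxselx
  have hxsel1 : ∀ Vv ∈ 𝒱₁, xsel Vv ∈ H := fun Vv h => (hxsel Vv h).1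
  have hxsel2 : ∀ Vv ∈ 𝒱₁, Vv = interior (Wf (xsel Vv)) := fun Vv h => (hxsel Vv h).2
  set ℛ : Set (Set X) := (fun Vv => Wf (xsel Vv)) '' 𝒱₁ with hℛ
  have hℛDp : ℛ ⊆ stmt11Dp V H := by
    rintro s ⟨Vv, hVv, rfl⟩
    exact stmt11_mem_Dp_single (hxsel1 Vv hVv) (hWf1 _ (hxsel1 Vv hVv))
  have hqnot : q ∉ ⋃₀ ℛ := by
    rintro ⟨s, ⟨Vv, hVv, rfl⟩, hqs⟩
    exact hWf2 _ (hxsel1 Vv hVv) hqs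
  have hcl : ∀ Vv ∈ 𝒱₁, closure Vv ⊆ Wf (xsel Vv) := by
    intro Vv hVv
    have heq : closure Vv = closure (interior (Wf (xsel Vv))) := by
      conv_lhs => rw [hxsel2 Vv hVv]
    rw [heq]
    exact closure_minimal interior_subset (hVc _ _ (hWf1 _ (hxsel1 Vv hVv))).1
  have hHsub : H ⊆ ⋃₀ ℛ := by
    intro x hx
    have hx2 : x ∈ ⋃ Vv ∈ 𝒱, closure Vv := h𝒱cov ▸ Set.mem_univ x
    obtain ⟨Vv, hVv, hxV⟩ := Set.mem_iUnion₂.1 hx2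
    have hV1 : Vv ∈ 𝒱₁ := by
      refine ⟨hVv, ?_⟩
      rcases h𝒱𝒰 hVv with (⟨y, hy, rfl⟩ | ⟨z, hz, rfl⟩)
      · exact ⟨y, hy, rfl⟩
      · exact absurd ⟨hxV, hx⟩ (Set.eq_empty_iff_forall_notMem.1 (hGf3 z hz) x)
    exact ⟨Wf (xsel Vv), ⟨Vv, hV1, rfl⟩, hcl Vv hV1 hxV⟩
  have hℛne : ℛ.Nonempty := by
    obtain ⟨s, hs, _⟩ := hHsub hx₀H
    exact ⟨s, hs⟩
  have hℛcard : #↥ℛ ≤ #ι := by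
    refine (Cardinal.mk_image_le).trans ?_
    refine ((Cardinal.mk_le_mk_of_subset (Set.sep_subset _ _)).trans h𝒱card).trans ?_
    rw [hικ]
    exact hlamκ
  obtain ⟨pp, hppH, hppnot⟩ :=
    hpicksH ℛ hℛDp hℛne hℛcard ⟨q, Set.mem_univ q, hqnot⟩
  exact hppnot (hHsub hppH)
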